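/- Let (Q,Z) be a gentle pair, i.e. a locally gentle pair having only finitely many admissible paths (equivalently, the quotient algebra is finite-dimensional). Then the Zembyk excision Q^✂(Z), the quiver obtained by iteratively taking levees at relational vertices until no relations remain, is acyclic. -/

import Mathlib

attribute [local instance] Classical.propDecidable

/-- A quiver: vertices, arrows, head and tail maps. -/
structure Quiv where
  V : Type
  A : Type
  h : A → V
  t : A → V

/-- A (possibly empty) list of arrows is a path when consecutive arrows compose:
`t aᵢ = h aᵢ₊₁` (paths are written right-to-left as in the paper). -/
def Quiv.IsPath (Q : Quiv) (p : List Q.A) : Prop :=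
  p.Chain' (fun x y => Q.t x = Q.h y)

/-- A locally gentle pair `(Q,Z)`: `Z` is a set of length-2 paths (pairs `(b,a)` with
`t b = h a`), every vertex is head (resp. tail) of at most two arrows, and each arrow
extends in at most one way inside `Z` and at most one way outside `Z` on each side. -/
structure LocallyGentle (Q : Quiv) (Z : Set (Q.A × Q.A)) : Prop where
  comp : ∀ p ∈ Z, Q.t p.1 = Q.h p.2
  head_two : ∀ (v : Q.V) (a b c : Q.A),
    Q.h a = v → Q.h b = v → Q.h c = v → a = b ∨ a = c ∨ b = c
  tail_two : ∀ (v : Q.V) (a b c : Q.A),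
    Q.t a = v → Q.t b = v → Q.t c = v → a = b ∨ a = c ∨ b = c
  rel_right : ∀ b a a' : Q.A, (b, a) ∈ Z → (b, a') ∈ Z → a = a'
  adm_right : ∀ b a a' : Q.A, Q.t b = Q.h a → Q.t b = Q.h a' →
    (b, a) ∉ Z → (b, a') ∉ Z → a = a'
  rel_left : ∀ b c c' : Q.A, (c, b) ∈ Z → (c', b) ∈ Z → c = c'
  adm_left : ∀ b c c' : Q.A, Q.t c = Q.h b → Q.t c' = Q.h b →
    (c, b) ∉ Z → (c', b) ∉ Z → c = c'

/-- A vertex is relational if some relation `ba ∈ Z` passes through it,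
i.e. `t b = v = h a`. -/
def Relational (Q : Quiv) (Z : Set (Q.A × Q.A)) (v : Q.V) : Prop :=
  ∃ b a : Q.A, (b, a) ∈ Z ∧ Q.t b = v ∧ Q.h a = v

/-- A choice, for every relational vertex `v`, of a relation `(b v, a v) ∈ Z` through `v`. -/
structure RelSelection (Q : Quiv) (Z : Set (Q.A × Q.A)) where
  b : Q.V → Q.A
  a : Q.V → Q.A
  spec : ∀ v : Q.V, Relational Q Z v →
    (b v, a v) ∈ Z ∧ Q.t (b v) = v ∧ Q.h (a v) = v

/-- The Zembyk excision `Q^✂(Z)`: the quiver obtained by simultaneously taking the levee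
at every relational vertex (equivalently, by iterating levees until no relation remains;
the result is independent of order).  A relational vertex `u` is replaced by
`u(♯) = Sum.inr (u, true)` and `u(♭) = Sum.inr (u, false)`. -/
noncomputable def excision (Q : Quiv) (Z : Set (Q.A × Q.A)) (s : RelSelection Q Z) : Quiv where
  V := {u : Q.V // ¬ Relational Q Z u} ⊕ ({u : Q.V // Relational Q Z u} × Bool)
  A := Q.A
  h := fun x =>
    if hx : Relational Q Z (Q.h x) then
      Sum.inr (⟨Q.h x, hx⟩, if (s.b (Q.h x), x) ∈ Z then false else true)
    else Sum.inl ⟨Q.h x, hx⟩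
  t := fun x =>
    if hx : Relational Q Z (Q.t x) then
      Sum.inr (⟨Q.t x, hx⟩, if (x, s.a (Q.t x)) ∈ Z then true else false)
    else Sum.inl ⟨Q.t x, hx⟩

/-- A quiver is acyclic when it has no oriented cycle: no nonempty path returning
to its starting vertex. -/
def Acyclic (Q : Quiv) : Prop :=
  ∀ (x : Q.A) (p : List Q.A), Q.IsPath (x :: p) →
    Q.t ((x :: p).getLast (List.cons_ne_nil x p)) ≠ Q.h x

/-- Key lemma: composability in the excision implies composability in `Q` avoiding `Z`. -/
lemma excision_comp (Q : Quiv) (Z : Set (Q.A × Q.A)) (lg : LocallyGentle Q Z)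
    (s : RelSelection Q Z) (a b : Q.A)
    (h : (excision Q Z s).t a = (excision Q Z s).h b) :
    Q.t a = Q.h b ∧ (a, b) ∉ Z := by
  simp only [excision] at h
  by_cases hta : Relational Q Z (Q.t a) <;> by_cases hhb : Relational Q Z (Q.h b) <;>
    [rw [dif_pos hta, dif_pos hhb] at h; rw [dif_pos hta, dif_neg hhb] at h;
     rw [dif_neg hta, dif_pos hhb] at h; rw [dif_neg hta, dif_neg hhb] at h]
  · rw [Sum.inr.injEq, Prod.mk.injEq, Subtype.mk.injEq] at h
    obtain ⟨heq, hbool⟩ := h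
    refine ⟨heq, fun hz => ?_⟩
    by_cases h1 : (a, s.a (Q.t a)) ∈ Z
    · rw [if_pos h1] at hbool
      have h2 : (s.b (Q.h b), b) ∉ Z := by
        intro h2; rw [if_pos h2] at hbool; simp at hbool
      have hb' : b = s.a (Q.t a) := lg.rel_right a b _ hz h1
      have hsp := (s.spec (Q.t a) hta).1
      rw [heq] at hsp hb'
      rw [← hb'] at hsp
      exact h2 hsp
    · rw [if_neg h1] at hbool
      have h2 : (s.b (Q.h b), b) ∈ Z := by
        by_contra h2; rw [if_neg h2] at hbool; simp at hbool
      have ha' : a = s.b (Q.h b) := lg.rel_left b a _ hz h2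
      have hsp := (s.spec (Q.h b) hhb).1
      rw [← heq] at hsp ha'
      rw [← ha'] at hsp
      exact h1 hsp
  · exact absurd h (by simp)
  · exact absurd h (by simp)
  · rw [Sum.inl.injEq, Subtype.mk.injEq] at h
    exact ⟨h, fun hz => hta ⟨a, b, hz, rfl, h.symm⟩⟩

/-- For a gentle pair (a locally gentle pair with only finitely many admissible paths),
the Zembyk excision `Q^✂(Z)` is acyclic. -/
theorem stmt5 (Q : Quiv) (Z : Set (Q.A × Q.A)) (lg : LocallyGentle Q Z)
    (hgentle : {p : List Q.A | Q.IsPath p ∧ p.Chain' (fun x y => (x, y) ∉ Z)}.Finite)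
    (s : RelSelection Q Z) :
    Acyclic (excision Q Z s) := by
  intro x p hp heq
  set R : Q.A → Q.A → Prop := fun a b => Q.t a = Q.h b ∧ (a, b) ∉ Z with hR
  set c : List Q.A := x :: p with hc
  have hchain : c.Chain' R := hp.imp (fun a b hab => excision_comp Q Z lg s a b hab)
  have hwrap : R (c.getLast (List.cons_ne_nil x p)) x :=
    excision_comp Q Z lg s _ _ heq
  -- the n-fold repetition of c
  set f : ℕ → List Q.A := fun n => (List.replicate n c).flatten with hf
  have hstep : ∀ n, f (n + 1) = c ++ f n := by
    intro n; simp [hf, List.replicate_succ]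
  have hmain : ∀ n, (f (n + 1)).Chain' R ∧ (f (n + 1)).head? = some x := by
    intro n
    induction n with
    | zero =>
      have h1 : f (0 + 1) = c := by simp [hf]
      rw [h1]; exact ⟨hchain, rfl⟩
    | succ n ih =>
      rw [hstep (n + 1)]
      constructor
      · refine List.isChain_append.mpr ⟨hchain, ih.1, ?_⟩
        intro a ha b hb
        rw [List.getLast?_eq_getLast (l := c) (List.cons_ne_nil x p)] at ha
        rw [ih.2] at hb
        simp only [Option.mem_def, Option.some.injEq] at ha hb
        rw [ha] at hwrap
        cases hb; exact hwrap
      · rfl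
  have hlen : ∀ n, (f n).length = n * c.length := by
    intro n
    induction n with
    | zero => simp [hf]
    | succ n ih => rw [hstep, List.length_append, ih]; ring
  have hinj : Function.Injective (fun n => f (n + 1)) := by
    intro m n hmn
    have := congrArg List.length hmn
    simp only [hlen] at this
    have hclen : 0 < c.length := Nat.succ_pos _
    exact Nat.succ_injective (Nat.eq_of_mul_eq_mul_right hclen this)
  have hmem : ∀ n, f (n + 1) ∈ {p : List Q.A | Q.IsPath p ∧ p.Chain' (fun x y => (x, y) ∉ Z)} := by
    intro n
    exact ⟨(hmain n).1.imp (fun a b hab => hab.1), (hmain n).1.imp (fun a b hab => hab.2)⟩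
  exact hgentle.not_infinite (Set.infinite_of_injective_forall_mem hinj hmem)
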